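/- Let γ, p > 0, η > 1 and β < pγ. Then for every u > 0, f_{β,γ,p,η}(u) = ∫_1^{η^{1/p}} g_{(pγ-β),p,θ^p}(u) m_{β,γ,p,η}(θ) dθ, where m_{β,γ,p,η}(θ) = (p / K*_{β,γ,p,η}) (θ^p - 1)^{γ-1} θ^{p+β-pγ-1} for 1 < θ < η^{1/p}. In other words, the incomplete gamma distribution is a generalized gamma scale mixture with mixing density m_{β,γ,p,η}. -/

import Mathlib

open MeasureTheory Set

/-- The generalized gamma density `g_{γ,p,θ}(u) = (p θ^(γ/p) / Γ(γ/p)) u^(γ-1) e^(-u^p θ)`. -/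
noncomputable def gg (γ p θ u : ℝ) : ℝ :=
  p * θ ^ (γ / p) / Real.Gamma (γ / p) * u ^ (γ - 1) * Real.exp (-(u ^ p * θ))

/-- The scaled lower incomplete gamma function `G_γ(u) = (1/Γ(γ)) ∫_0^u x^(γ-1) e^(-x) dx`. -/
noncomputable def Gl (γ u : ℝ) : ℝ :=
  (1 / Real.Gamma γ) * ∫ x in (0:ℝ)..u, x ^ (γ - 1) * Real.exp (-x)

/-- `K*_{β,γ,p,η} = ∫_{1/η}^1 (1-x)^(γ-1) x^(-β/p-1) dx`. -/
noncomputable def Kstar (β γ p η : ℝ) : ℝ :=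
  ∫ x in (1/η)..(1:ℝ), (1 - x) ^ (γ - 1) * x ^ (-β/p - 1)

/-- `K_{β,γ,p,η} = (Γ(γ-β/p)/(p Γ(γ))) K*_{β,γ,p,η}`. -/
noncomputable def Kc (β γ p η : ℝ) : ℝ :=
  Real.Gamma (γ - β/p) / (p * Real.Gamma γ) * Kstar β γ p η

/-- The incomplete gamma density `f_{β,γ,p,η}(u)` for `u > 0`. -/
noncomputable def figa (β γ p η u : ℝ) : ℝ :=
  (Kc β γ p η)⁻¹ * Gl γ (u ^ p * (η - 1)) * Real.exp (-(u ^ p)) * u ^ (-1 - β)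

/-- The mixing density `m_{β,γ,p,η}(θ) = (p / K*_{β,γ,p,η}) (θ^p - 1)^(γ-1) θ^(p+β-pγ-1)`
for `1 < θ < η^(1/p)`. -/
noncomputable def mdens (β γ p η θ : ℝ) : ℝ :=
  p / Kstar β γ p η * (θ ^ p - 1) ^ (γ - 1) * θ ^ (p + β - p * γ - 1)

lemma image_sub (p c A : ℝ) (hp : 0 < p) (hc : 0 < c) (hA : 1 < A) :
    (fun θ : ℝ => c * (θ ^ p - 1)) '' Ioo 1 A = Ioo 0 (c * (A ^ p - 1)) := by
  ext x
  constructor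
  · rintro ⟨θ, ⟨h1, h2⟩, rfl⟩
    have h0 : (0:ℝ) < θ := lt_trans one_pos h1
    have ha : (1:ℝ) < θ ^ p := by
      rw [show (1:ℝ) = 1 ^ p by simp]
      exact Real.rpow_lt_rpow zero_le_one h1 hp
    have hb : θ ^ p < A ^ p := Real.rpow_lt_rpow h0.le h2 hp
    exact ⟨mul_pos hc (by linarith), mul_lt_mul_of_pos_left (by linarith) hc⟩
  · rintro ⟨hx0, hxB⟩
    have h1 : (1:ℝ) < x / c + 1 := by
      have := div_pos hx0 hc; linarith
    refine ⟨(x / c + 1) ^ (1/p), ⟨?_, ?_⟩, ?_⟩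
    · exact (Real.one_lt_rpow_iff_of_pos (by linarith)).mpr
        (Or.inl ⟨h1, by positivity⟩)
    · have h2 : x / c + 1 < A ^ p := by
        have := (div_lt_iff₀ hc).mpr (by linarith : x < (A ^ p - 1) * c)
        linarith
      calc (x / c + 1) ^ (1/p) < (A ^ p) ^ (1/p) :=
            Real.rpow_lt_rpow (by linarith) h2 (by positivity)
        _ = A := by
            rw [one_div, Real.rpow_rpow_inv (by positivity : (0:ℝ) ≤ A) hp.ne']
    · show c * (((x / c + 1) ^ (1/p)) ^ p - 1) = x
      rw [one_div, Real.rpow_inv_rpow (by positivity) hp.ne']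
      field_simp
      ring

lemma key_sub (γ p c A : ℝ) (hp : 0 < p) (hc : 0 < c) (hA : 1 < A) :
    ∫ x in Ioo 0 (c * (A ^ p - 1)), x ^ (γ - 1) * Real.exp (-x)
      = ∫ θ in Ioo 1 A,
          |c * (p * θ ^ (p - 1))| *
            ((c * (θ ^ p - 1)) ^ (γ - 1) * Real.exp (-(c * (θ ^ p - 1)))) := by
  rw [← image_sub p c A hp hc hA]
  have hderiv : ∀ θ ∈ Ioo (1:ℝ) A, HasDerivWithinAt (fun θ : ℝ => c * (θ ^ p - 1))
      (c * (p * θ ^ (p - 1))) (Ioo 1 A) θ := by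
    intro θ hθ
    have hθ0 : θ ≠ 0 := by have := hθ.1; positivity
    exact (((Real.hasDerivAt_rpow_const (Or.inl hθ0)).sub_const 1).const_mul c).hasDerivWithinAt
  have hinj : InjOn (fun θ : ℝ => c * (θ ^ p - 1)) (Ioo 1 A) := by
    have smo : StrictMonoOn (fun θ : ℝ => c * (θ ^ p - 1)) (Ioo 1 A) := by
      intro a ha b hb hab
      have : a ^ p < b ^ p := Real.rpow_lt_rpow (by linarith [ha.1]) hab hp
      exact mul_lt_mul_of_pos_left (by linarith) hc
    exact smo.injOn
  simpa [smul_eq_mul] using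
    integral_image_eq_integral_abs_deriv_smul measurableSet_Ioo hderiv hinj
      (fun x => x ^ (γ - 1) * Real.exp (-x))

set_option maxHeartbeats 1000000 in
theorem iga_is_ggsm (γ p η β : ℝ) (hγ : 0 < γ) (hp : 0 < p) (hη : 1 < η)
    (hβ : β < p * γ) :
    ∀ u, 0 < u →
      figa β γ p η u =
        ∫ θ in (1:ℝ)..(η ^ (1/p)), gg (p * γ - β) p (θ ^ p) u * mdens β γ p η θ := by
  intro u hu
  have hη0 : (0:ℝ) < η := by linarith
  set A : ℝ := η ^ (1/p) with hAdef
  have hA1 : (1:ℝ) < A :=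
    (Real.one_lt_rpow_iff_of_pos hη0).mpr (Or.inl ⟨hη, by positivity⟩)
  have hAp : A ^ p = η := by
    rw [hAdef, one_div, Real.rpow_inv_rpow hη0.le hp.ne']
  set c : ℝ := u ^ p with hcdef
  have hc : 0 < c := Real.rpow_pos_of_pos hu p
  have hΓγ : 0 < Real.Gamma γ := Real.Gamma_pos_of_pos hγ
  have hΓ' : 0 < Real.Gamma (γ - β/p) :=
    Real.Gamma_pos_of_pos (by rw [sub_pos]; exact (div_lt_iff₀ hp).mpr (by linarith))
  by_cases hK : Kstar β γ p η = 0
  · simp [figa, Kc, mdens, hK]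
  set D : ℝ := p * u ^ (p*γ - β - 1) /
      (Real.exp c * c ^ γ * (Real.Gamma (γ - β/p) * Kstar β γ p η)) with hDdef
  have h6 : (p*γ - β) / p = γ - β/p := by field_simp
  have hEq : EqOn (fun θ => gg (p * γ - β) p (θ ^ p) u * mdens β γ p η θ)
      (fun θ => D * (|c * (p * θ ^ (p - 1))| *
        ((c * (θ ^ p - 1)) ^ (γ - 1) * Real.exp (-(c * (θ ^ p - 1))))))
      (uIcc (1:ℝ) A) := by
    intro θ hθ
    rw [uIcc_of_le hA1.le] at hθ
    have hθ1 : (1:ℝ) ≤ θ := hθ.1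
    have hθ0 : (0:ℝ) < θ := lt_of_lt_of_le one_pos hθ1
    have h1p : (1:ℝ) ≤ θ ^ p := Real.one_le_rpow hθ1 hp.le
    have h1 : (θ ^ p) ^ (γ - β/p) = θ ^ (p*γ - β) := by
      rw [← Real.rpow_mul hθ0.le]; congr 1; field_simp
    have h2 : θ ^ (p*γ - β) * θ ^ (p + β - p*γ - 1) = θ ^ (p - 1) := by
      rw [← Real.rpow_add hθ0]; congr 1; ring
    have h3 : (c * (θ ^ p - 1)) ^ (γ - 1) = c ^ (γ - 1) * (θ ^ p - 1) ^ (γ - 1) :=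
      Real.mul_rpow hc.le (by linarith)
    have h4 : Real.exp (-(c * (θ ^ p - 1))) = Real.exp c * Real.exp (-(c * θ ^ p)) := by
      rw [← Real.exp_add]; congr 1; ring
    have h5 : |c * (p * θ ^ (p - 1))| = c * (p * θ ^ (p - 1)) := by
      have h : (0:ℝ) < θ ^ (p - 1) := Real.rpow_pos_of_pos hθ0 _
      exact abs_of_pos (by positivity)
    have h7 : c ^ γ = c ^ (γ - 1) * c := by
      rw [← Real.rpow_add_one hc.ne']; congr 1; ring
    simp only [gg, mdens, hDdef]
    rw [← hcdef, h6, h1, h5, h3, h4, ← h2, h7]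
    set G : ℝ := Real.Gamma (γ - β/p) with hGdef
    set K : ℝ := Kstar β γ p η with hKdef
    set E : ℝ := Real.exp c with hEdef
    set W : ℝ := c ^ (γ - 1) with hWdef
    have hE : E ≠ 0 := Real.exp_ne_zero c
    have hW : W ≠ 0 := (Real.rpow_pos_of_pos hc (γ - 1)).ne'
    field_simp [hK, hΓ'.ne', hE, hW, hc.ne']
  rw [intervalIntegral.integral_congr hEq, intervalIntegral.integral_const_mul,
    intervalIntegral.integral_of_le hA1.le, integral_Ioc_eq_integral_Ioo,
    ← key_sub γ p c A hp hc hA1, hAp]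
  have h0B : (0:ℝ) ≤ c * (η - 1) := mul_nonneg hc.le (by linarith)
  rw [← integral_Ioc_eq_integral_Ioo, ← intervalIntegral.integral_of_le h0B]
  simp only [figa, Kc, Gl, hDdef]
  rw [← hcdef]
  have h9 : c ^ γ = u ^ (p*γ) := by rw [hcdef, ← Real.rpow_mul hu.le]
  have hupγ : u ^ (p*γ) ≠ 0 := (Real.rpow_pos_of_pos hu (p*γ)).ne'
  have h8 : u ^ (-1 - β) = u ^ (p*γ - β - 1) / u ^ (p*γ) := by
    rw [eq_div_iff hupγ, ← Real.rpow_add hu]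
    congr 1; ring
  rw [h8, h9, Real.exp_neg]
  set G : ℝ := Real.Gamma (γ - β/p) with hGdef
  set K : ℝ := Kstar β γ p η with hKdef
  set E : ℝ := Real.exp c with hEdef
  set V : ℝ := u ^ (p*γ) with hVdef
  have hE : E ≠ 0 := Real.exp_ne_zero c
  field_simp [hK, hΓγ.ne', hΓ'.ne', hE, hupγ]
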